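/- Let p be an orthogonal partition of 2n all of whose parts are even (so every part occurs with even multiplicity and n* = 0, in which case the extra parts 2n*−1 and 1 in the construction cancel). Then [p_1 p_1]^{SO_{2n}} = (p^t)_{SO_{2n}}, where [p_1 p_1] is the partition of 2n whose parts are the parts of two copies of p_1. (Theorem 4.2(3) of the paper for G_n = SO^α_{2n} in the case that all parts have the same even parity; here η_{so_{2n},so_{2n}}(p) = (p^t)_{SO_{2n}}.) -/

import Mathlib

/-!  Basic combinatorics of partitions: transpose, dominance order,
symplectic/orthogonal partitions, collapses and expansions, and the
dimension formulas for nilpotent orbits. -/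

/-- `p` is a partition of `N`: a multiset of positive integers summing to `N`. -/
def IsPartitionOf (N : ℕ) (p : Multiset ℕ) : Prop := p.sum = N ∧ 0 ∉ p

/-- Sum of the `k` largest parts of `p`:
`Σ_{j ≥ 1} min k #{i : p_i ≥ j}`. -/
def psum (p : Multiset ℕ) (k : ℕ) : ℕ :=
  ((Multiset.range p.sum).map (fun j => min k (p.countP (fun a => j + 1 ≤ a)))).sum

/-- Dominance order on partitions: `DomLE p q` means `p ≤ q`, i.e. for every `k`
the sum of the `k` largest parts of `p` is at most that of `q`. -/
def DomLE (p q : Multiset ℕ) : Prop := ∀ k, psum p k ≤ psum q k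

/-- The transpose of a partition: its `j`-th part is `#{i : p_i ≥ j}`. -/
def transpose (p : Multiset ℕ) : Multiset ℕ :=
  (((Multiset.range p.sum).map (fun j => p.countP (fun a => j + 1 ≤ a))).filter (0 < ·))

/-- A partition is symplectic if every odd part occurs with even multiplicity. -/
def IsSymplectic (p : Multiset ℕ) : Prop := ∀ a, Odd a → Even (p.count a)

/-- A partition is orthogonal if every even part occurs with even multiplicity. -/
def IsOrthogonal (p : Multiset ℕ) : Prop := ∀ a, Even a → Even (p.count a)

/-- `q` is the `P`-collapse of `p` (as partitions of `N`): the largest partition of `N`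
satisfying `P` which is `≤ p` in the dominance order. -/
def IsCollapseOf (P : Multiset ℕ → Prop) (N : ℕ) (p q : Multiset ℕ) : Prop :=
  IsPartitionOf N q ∧ P q ∧ DomLE q p ∧
    ∀ q', IsPartitionOf N q' → P q' → DomLE q' p → DomLE q' q

open Classical in
noncomputable def collapseOf (P : Multiset ℕ → Prop) (N : ℕ) (p : Multiset ℕ) : Multiset ℕ :=
  if h : ∃ q, IsCollapseOf P N p q then h.choose else 0

/-- The symplectic collapse `p_{Sp_N}` of a partition `p` of `N` (`N` even). -/
noncomputable def sympCollapse (N : ℕ) (p : Multiset ℕ) : Multiset ℕ :=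
  collapseOf IsSymplectic N p

/-- The orthogonal collapse `p_{SO_N}` of a partition `p` of `N`. -/
noncomputable def orthCollapse (N : ℕ) (p : Multiset ℕ) : Multiset ℕ :=
  collapseOf IsOrthogonal N p

/-- A symplectic partition `p` of `N` is special if `(((p^t)_{Sp_N})^t)_{Sp_N} = p`. -/
def IsSpecialSymp (N : ℕ) (p : Multiset ℕ) : Prop :=
  sympCollapse N (transpose (sympCollapse N (transpose p))) = p

/-- An orthogonal partition `p` of `N` is special if `(((p^t)_{SO_N})^t)_{SO_N} = p`. -/
def IsSpecialOrth (N : ℕ) (p : Multiset ℕ) : Prop :=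
  orthCollapse N (transpose (orthCollapse N (transpose p))) = p

/-- `q` is the `(P, Sp)`-expansion of `p`: the smallest partition of `N` satisfying
`P` and the speciality predicate `Sp` which is `≥ p` in the dominance order. -/
def IsExpansionOf (P Sp : Multiset ℕ → Prop) (N : ℕ) (p q : Multiset ℕ) : Prop :=
  IsPartitionOf N q ∧ P q ∧ Sp q ∧ DomLE p q ∧
    ∀ q', IsPartitionOf N q' → P q' → Sp q' → DomLE p q' → DomLE q q'

open Classical in
noncomputable def expansionOf (P Sp : Multiset ℕ → Prop) (N : ℕ) (p : Multiset ℕ) :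
    Multiset ℕ :=
  if h : ∃ q, IsExpansionOf P Sp N p q then h.choose else 0

/-- The symplectic expansion `p^{Sp_N}`: the smallest special symplectic partition of `N`
which is `≥ p` in the dominance order. -/
noncomputable def sympExpansion (N : ℕ) (p : Multiset ℕ) : Multiset ℕ :=
  expansionOf IsSymplectic (IsSpecialSymp N) N p

/-- The orthogonal expansion `p^{SO_N}`: the smallest special orthogonal partition of `N`
which is `≥ p` in the dominance order. -/
noncomputable def orthExpansion (N : ℕ) (p : Multiset ℕ) : Multiset ℕ :=
  expansionOf IsOrthogonal (IsSpecialOrth N) N p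

/-- The smallest part of a (nonempty) partition. -/
def minPart (p : Multiset ℕ) : ℕ := p.sum - psum p (Multiset.card p - 1)

/-- The largest part of a partition. -/
def maxPart (p : Multiset ℕ) : ℕ := psum p 1

/-- `p^-`: decrease the smallest part of `p` by `1` (deleting it if it becomes `0`). -/
def pMinus (p : Multiset ℕ) : Multiset ℕ :=
  ((minPart p - 1) ::ₘ p.erase (minPart p)).filter (0 < ·)

/-- `p^+`: increase the largest part of `p` by `1`. -/
def pPlus (p : Multiset ℕ) : Multiset ℕ :=
  (maxPart p + 1) ::ₘ p.erase (maxPart p)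

/-- `dim_{sp_{2n}}(p) = 2n² + n − ½(Σ_i ((p^t)_i)² + #{i : p_i odd})`,
the dimension of the nilpotent orbit of `sp_{2n}` attached to a symplectic
partition `p` of `2n`. -/
def dimSp (n : ℕ) (p : Multiset ℕ) : ℚ :=
  (2 * (n : ℚ) ^ 2 + n) -
    (((transpose p).map (fun x => (x : ℚ) ^ 2)).sum + (p.countP (Odd ·) : ℚ)) / 2

/-- `dim_{so_m}(p) = m(m−1)/2 − ½(Σ_i ((p^t)_i)² − #{i : p_i odd})`,
the dimension of the nilpotent orbit of `so_m` attached to an orthogonal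
partition `p` of `m`. -/
def dimSO (m : ℕ) (p : Multiset ℕ) : ℚ :=
  ((m : ℚ) * ((m : ℚ) - 1)) / 2 -
    (((transpose p).map (fun x => (x : ℚ) ^ 2)).sum - (p.countP (Odd ·) : ℚ)) / 2

/-- The partition `p_1 = [⌊b_1/2⌋^{a_1} ⋯ ⌊b_r/2⌋^{a_r}]^t` attached to
`p = [b_1^{a_1} ⋯ b_r^{a_r}]` (zero entries discarded). -/
def pOne (p : Multiset ℕ) : Multiset ℕ := transpose (p.map (· / 2))

/-- `n* = ⌊(Σ_{i : b_i odd} a_i)/2⌋`, i.e. half the number of odd parts. -/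
def nStar (p : Multiset ℕ) : ℕ := p.countP (Odd ·) / 2

/-- `[q q (m)]`: two copies of `q` together with one extra part `m`
(no extra part when `m = 0`). -/
def qqm (q : Multiset ℕ) (m : ℕ) : Multiset ℕ :=
  if m = 0 then q + q else m ::ₘ (q + q)


-- ### helpers

/-- abbreviation: number of parts of `p` that are `≥ j+1`. -/
def cnt (p : Multiset ℕ) (j : ℕ) : ℕ := p.countP (fun a => j + 1 ≤ a)

lemma countP_le_of_imp {P Q : ℕ → Prop} [DecidablePred P] [DecidablePred Q]
    (s : Multiset ℕ) (h : ∀ a ∈ s, P a → Q a) : s.countP P ≤ s.countP Q := by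
  induction s using Multiset.induction_on with
  | empty => simp
  | cons a s ih =>
    simp only [Multiset.countP_cons]
    have h1 := h a (Multiset.mem_cons_self a s)
    have h2 := ih (fun b hb => h b (Multiset.mem_cons_of_mem hb))
    split_ifs with hP hQ <;> try omega
    exact absurd (h1 hP) hQ

lemma cnt_antitone (p : Multiset ℕ) {j j' : ℕ} (h : j ≤ j') : cnt p j' ≤ cnt p j :=
  countP_le_of_imp p (fun a _ ha => by omega)

lemma countP_split (p : Multiset ℕ) (a : ℕ) :
    p.countP (fun x => a ≤ x) = p.count a + p.countP (fun x => a + 1 ≤ x) := by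
  induction p using Multiset.induction_on with
  | empty => simp
  | cons b s ih =>
    simp only [Multiset.countP_cons, Multiset.count_cons, ih]
    split_ifs <;> omega

lemma eq_of_cnt_eq {p q : Multiset ℕ} (hp : 0 ∉ p) (hq : 0 ∉ q)
    (h : ∀ j, cnt p j = cnt q j) : p = q := by
  ext a
  match a with
  | 0 =>
    rw [Multiset.count_eq_zero_of_notMem hp, Multiset.count_eq_zero_of_notMem hq]
  | b + 1 =>
    have h1 := countP_split p (b + 1)
    have h2 := countP_split q (b + 1)
    have hb := h b
    have hb1 := h (b + 1)
    simp only [cnt] at hb hb1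
    omega

lemma card_le_sum {p : Multiset ℕ} (hp : 0 ∉ p) : Multiset.card p ≤ p.sum := by
  induction p using Multiset.induction_on with
  | empty => simp
  | cons a s ih =>
    simp only [Multiset.card_cons, Multiset.sum_cons]
    have ha : a ≠ 0 := fun h => hp (h ▸ Multiset.mem_cons_self a s)
    have := ih (fun h => hp (Multiset.mem_cons_of_mem h))
    omega

lemma cnt_le_sum (p : Multiset ℕ) (hp : 0 ∉ p) (j : ℕ) : cnt p j ≤ p.sum :=
  le_trans (Multiset.countP_le_card _ _) (card_le_sum hp)

lemma cnt_eq_zero (p : Multiset ℕ) (hp : 0 ∉ p) {j : ℕ} (hj : p.sum ≤ j) : cnt p j = 0 := by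
  rw [cnt, Multiset.countP_eq_zero]
  intro a ha
  have := Multiset.le_sum_of_mem ha
  omega

lemma filter_pos_sum (s : Multiset ℕ) : (s.filter (0 < ·)).sum = s.sum := by
  induction s using Multiset.induction_on with
  | empty => simp
  | cons a s ih => by_cases h : 0 < a <;> simp [Multiset.filter_cons, h, ih] <;> omega

lemma countP_filter_pos (s : Multiset ℕ) (k : ℕ) :
    (s.filter (0 < ·)).countP (fun x => k + 1 ≤ x) = s.countP (fun x => k + 1 ≤ x) := by
  rw [Multiset.countP_filter]
  exact Multiset.countP_congr rfl (fun x _ => by rw [eq_iff_iff]; omega)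

lemma zero_not_mem_transpose (p : Multiset ℕ) : 0 ∉ transpose p := by
  intro h
  have := (Multiset.mem_filter.mp h).2
  omega

lemma cnt_transpose_eq_countP_range (p : Multiset ℕ) (k : ℕ) :
    cnt (transpose p) k =
      (Multiset.range p.sum).countP (fun j => k + 1 ≤ cnt p j) := by
  rw [cnt, transpose, countP_filter_pos, Multiset.countP_map]
  rw [Multiset.countP_eq_card_filter]
  rfl

lemma countP_range_lt (N k : ℕ) :
    (Multiset.range N).countP (fun j => j < k) = min k N := by
  induction N with
  | zero => simp
  | succ N ih => simp only [Multiset.range_succ, Multiset.countP_cons, ih]; split_ifs <;> omega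

lemma sum_map_ite_eq_countP {P : ℕ → Prop} [DecidablePred P] (s : Multiset ℕ) :
    (s.map (fun j => if P j then 1 else 0)).sum = s.countP P := by
  induction s using Multiset.induction_on with
  | empty => simp
  | cons a s ih => simp [Multiset.countP_cons, ih]; split_ifs <;> omega

lemma transpose_sum {p : Multiset ℕ} (hp : 0 ∉ p) : (transpose p).sum = p.sum := by
  rw [transpose, filter_pos_sum]
  -- Σ_{j < N} cnt p j = p.sum, where all parts ≤ N
  have key : ∀ (q : Multiset ℕ) (N : ℕ), (∀ a ∈ q, a ≤ N) →
      ((Multiset.range N).map (fun j => q.countP (fun a => j + 1 ≤ a))).sum = q.sum := by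
    intro q
    induction q using Multiset.induction_on with
    | empty => simp
    | cons a s ih =>
      intro N hN
      have hmap : ((Multiset.range N).map
          (fun j => (a ::ₘ s).countP (fun b => j + 1 ≤ b))).sum
          = ((Multiset.range N).map (fun j => s.countP (fun b => j + 1 ≤ b))).sum
            + ((Multiset.range N).map (fun j => if j + 1 ≤ a then 1 else 0)).sum := by
        rw [← Multiset.sum_map_add]
        congr 1
        apply Multiset.map_congr rfl
        intro j _
        rw [Multiset.countP_cons]
      rw [hmap, ih N (fun b hb => hN b (Multiset.mem_cons_of_mem hb)),
        sum_map_ite_eq_countP]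
      have : (Multiset.range N).countP (fun j => j + 1 ≤ a)
          = (Multiset.range N).countP (fun j => j < a) :=
        Multiset.countP_congr rfl (fun x _ => by simp)
      rw [this, countP_range_lt]
      have := hN a (Multiset.mem_cons_self a s)
      simp only [Multiset.sum_cons]
      omega
  exact key p p.sum (fun a ha => Multiset.le_sum_of_mem ha)

/-- pigeonhole for antitone count profiles -/
lemma countP_range_ge_iff {p : Multiset ℕ} {N k m : ℕ} (hk : k < N) :
    k + 1 ≤ (Multiset.range N).countP (fun j => m ≤ cnt p j) ↔ m ≤ cnt p k := by
  constructor
  · intro h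
    by_contra hc
    push_neg at hc
    have hle : (Multiset.range N).countP (fun j => m ≤ cnt p j)
        ≤ (Multiset.range N).countP (fun j => j < k) := by
      apply countP_le_of_imp
      intro j _ hj
      by_contra hjk
      push_neg at hjk
      have := cnt_antitone p hjk
      omega
    rw [countP_range_lt] at hle
    omega
  · intro h
    have hge : (Multiset.range N).countP (fun j => j < k + 1)
        ≤ (Multiset.range N).countP (fun j => m ≤ cnt p j) := by
      apply countP_le_of_imp
      intro j _ hj
      have := cnt_antitone p (show j ≤ k by omega)
      omega
    rw [countP_range_lt] at hge
    omega

lemma cnt_transpose_transpose {p : Multiset ℕ} (hp : 0 ∉ p) (k : ℕ) :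
    cnt (transpose (transpose p)) k = cnt p k := by
  set N := p.sum with hN
  by_cases hk : k < N
  · rw [cnt_transpose_eq_countP_range, transpose_sum hp]
    have step : ∀ j, (k + 1 ≤ cnt (transpose p) j) ↔ (j < cnt p k) := by
      intro j
      rw [cnt_transpose_eq_countP_range]
      rw [countP_range_ge_iff hk]
      omega
    have : (Multiset.range N).countP (fun j => k + 1 ≤ cnt (transpose p) j)
        = (Multiset.range N).countP (fun j => j < cnt p k) :=
      Multiset.countP_congr rfl (fun x _ => by rw [eq_iff_iff]; exact step x)
    rw [this, countP_range_lt]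
    have := cnt_le_sum p hp k
    omega
  · push_neg at hk
    rw [cnt_eq_zero _ (zero_not_mem_transpose _), cnt_eq_zero _ hp hk]
    rw [transpose_sum (zero_not_mem_transpose p), transpose_sum hp]
    exact hk

lemma transpose_transpose {p : Multiset ℕ} (hp : 0 ∉ p) : transpose (transpose p) = p :=
  eq_of_cnt_eq (zero_not_mem_transpose _) hp (cnt_transpose_transpose hp)

lemma psum_succ (p : Multiset ℕ) (k : ℕ) :
    psum p (k + 1) = psum p k + cnt (transpose p) k := by
  rw [cnt_transpose_eq_countP_range, psum, psum]
  have : ((Multiset.range p.sum).map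
      (fun j => min (k + 1) (p.countP (fun a => j + 1 ≤ a)))).sum
      = ((Multiset.range p.sum).map (fun j => min k (p.countP (fun a => j + 1 ≤ a))
          + if k + 1 ≤ cnt p j then 1 else 0)).sum := by
    apply congrArg
    apply Multiset.map_congr rfl
    intro j _
    by_cases h : k + 1 ≤ cnt p j
    · rw [if_pos h]; simp only [cnt] at h; omega
    · rw [if_neg h]; simp only [cnt] at h; omega
  rw [this, Multiset.sum_map_add, sum_map_ite_eq_countP]

lemma dom_antisymm {p q : Multiset ℕ} (hp : 0 ∉ p) (hq : 0 ∉ q)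
    (h1 : DomLE p q) (h2 : DomLE q p) : p = q := by
  have hps : ∀ k, psum p k = psum q k := fun k => le_antisymm (h1 k) (h2 k)
  have hcnt : ∀ k, cnt (transpose p) k = cnt (transpose q) k := by
    intro k
    have e1 := psum_succ p k
    have e2 := psum_succ q k
    have := hps k
    have := hps (k + 1)
    omega
  have := eq_of_cnt_eq (zero_not_mem_transpose p) (zero_not_mem_transpose q) hcnt
  calc p = transpose (transpose p) := (transpose_transpose hp).symm
    _ = transpose (transpose q) := by rw [this]
    _ = q := transpose_transpose hq

lemma domle_refl (p : Multiset ℕ) : DomLE p p := fun _ => le_rfl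



lemma collapse_self {P : Multiset ℕ → Prop} {N : ℕ} {q : Multiset ℕ}
    (hq : IsPartitionOf N q) (hPq : P q) : collapseOf P N q = q := by
  have hw : IsCollapseOf P N q q := ⟨hq, hPq, domle_refl q, fun q' _ _ h => h⟩
  have h : ∃ r, IsCollapseOf P N q r := ⟨q, hw⟩
  rw [collapseOf, dif_pos h]
  obtain ⟨hpart, hP, hdom, hmax⟩ := h.choose_spec
  exact dom_antisymm hpart.2 hq.2 hdom (hmax q hq hPq (domle_refl q))

lemma expansion_self {P Sp : Multiset ℕ → Prop} {N : ℕ} {q : Multiset ℕ}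
    (hq : IsPartitionOf N q) (hPq : P q) (hSq : Sp q) : expansionOf P Sp N q = q := by
  have hw : IsExpansionOf P Sp N q q :=
    ⟨hq, hPq, hSq, domle_refl q, fun q' _ _ _ h => h⟩
  have h : ∃ r, IsExpansionOf P Sp N q r := ⟨q, hw⟩
  rw [expansionOf, dif_pos h]
  obtain ⟨hpart, hP, hS, hdom, hmin⟩ := h.choose_spec
  exact dom_antisymm hpart.2 hq.2 (hmin q hq hPq hSq (domle_refl q)) hdom

lemma range_twoMul_eq (n : ℕ) : Multiset.range (2 * n)
    = (Multiset.range n).map (fun i => 2 * i) + (Multiset.range n).map (fun i => 2 * i + 1) := by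
  induction n with
  | zero => simp
  | succ n ih =>
    have h2 : 2 * (n + 1) = (2 * n + 1) + 1 := by ring
    rw [h2]
    simp only [Multiset.range_succ, Multiset.map_cons, ih, Multiset.cons_add,
      Multiset.add_cons]

lemma map_half_sum {p : Multiset ℕ} (heven : ∀ a ∈ p, Even a) :
    2 * (p.map (· / 2)).sum = p.sum := by
  induction p using Multiset.induction_on with
  | empty => simp
  | cons a s ih =>
    have ha := heven a (Multiset.mem_cons_self a s)
    have hs := ih (fun b hb => heven b (Multiset.mem_cons_of_mem hb))
    obtain ⟨b, rfl⟩ := ha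
    simp only [Multiset.map_cons, Multiset.sum_cons]
    omega

lemma cnt_even_double {p : Multiset ℕ} (heven : ∀ a ∈ p, Even a) (i : ℕ) :
    cnt p (2 * i) = cnt (p.map (· / 2)) i := by
  rw [cnt, cnt, Multiset.countP_map, ← Multiset.countP_eq_card_filter]
  apply Multiset.countP_congr rfl
  intro a ha
  obtain ⟨b, rfl⟩ := heven a ha
  rw [eq_iff_iff]
  omega

lemma cnt_even_double_succ {p : Multiset ℕ} (heven : ∀ a ∈ p, Even a) (i : ℕ) :
    cnt p (2 * i + 1) = cnt (p.map (· / 2)) i := by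
  rw [cnt, cnt, Multiset.countP_map, ← Multiset.countP_eq_card_filter]
  apply Multiset.countP_congr rfl
  intro a ha
  obtain ⟨b, rfl⟩ := heven a ha
  rw [eq_iff_iff]
  omega

lemma pOne_add_pOne {p : Multiset ℕ} (heven : ∀ a ∈ p, Even a) :
    pOne p + pOne p = transpose p := by
  rw [pOne, transpose, transpose, ← map_half_sum heven, range_twoMul_eq,
    Multiset.map_add, Multiset.map_map, Multiset.map_map, Multiset.filter_add]
  congr 1 <;>
  · congr 1
    apply Multiset.map_congr rfl
    intro i _
    simp only [Function.comp_apply]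
    first
      | exact (cnt_even_double heven i).symm
      | exact (cnt_even_double_succ heven i).symm


/-- Theorem 4.2(3), all parts even: let `p` be an orthogonal partition of
`2n` (`n ≥ 1`) all of whose parts are even (so `n* = 0` and the extra parts `2n*−1` and
`1` cancel). Then `[p₁ p₁]^{SO_{2n}} = (p^t)_{SO_{2n}}`. -/
theorem criterion_so_even_even_parts (n : ℕ) (hn : 1 ≤ n) (p : Multiset ℕ)
    (hp : IsPartitionOf (2 * n) p) (horth : IsOrthogonal p)
    (heven : ∀ a ∈ p, Even a) :
    orthExpansion (2 * n) (pOne p + pOne p) = orthCollapse (2 * n) (transpose p) := by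
  obtain ⟨hsum, h0⟩ := hp
  have hA : pOne p + pOne p = transpose p := pOne_add_pOne heven
  have ht_part : IsPartitionOf (2 * n) (transpose p) :=
    ⟨by rw [transpose_sum h0, hsum], zero_not_mem_transpose p⟩
  have ht_orth : IsOrthogonal (transpose p) := by
    intro a _
    rw [← hA, Multiset.count_add]
    exact ⟨(pOne p).count a, rfl⟩
  have hcolt : orthCollapse (2 * n) (transpose p) = transpose p := by
    rw [orthCollapse]; exact collapse_self ht_part ht_orth
  have hcolp : orthCollapse (2 * n) p = p := by
    rw [orthCollapse]; exact collapse_self ⟨hsum, h0⟩ horth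
  have hspec : IsSpecialOrth (2 * n) (transpose p) := by
    rw [IsSpecialOrth, transpose_transpose h0, hcolp, hcolt]
  have hexp : orthExpansion (2 * n) (transpose p) = transpose p := by
    rw [orthExpansion]; exact expansion_self ht_part ht_orth hspec
  rw [hA, hexp, hcolt]
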